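/- arXiv:cs/0412085 — 8 statements merged into one kernel-verified Lean document; each statement's English description precedes it below -/
import Mathlib

section
/- Let q be a prime power, F = F_q, n a positive integer with n ≤ q−1, and 0 ≤ δ ≤ n−1. Let α ∈ F have multiplicative order at least n. Then the polynomials g_j(z) = Σ_{ν=0}^{δ} (α^j z)^ν for j = 0,…,n−1 have no common root in any field extension of F; equivalently, their gcd in F[z] is 1. -/
open Polynomial

/-- For a finite field `F` of prime-power cardinality `q`, `n ≤ q - 1`,
`0 ≤ δ ≤ n - 1`, and `α ∈ F` of multiplicative order at least `n`, the polynomials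
`g_j(z) = Σ_{ν=0}^{δ} (α^j z)^ν`, `j = 0, …, n-1`, have gcd `1` in `F[z]`
(equivalently, no common root in any field extension). -/
theorem stmt0 (F : Type*) [Field F] [Fintype F] [DecidableEq F] (q n δ : ℕ)
    (hq : IsPrimePow q) (hcard : Fintype.card F = q)
    (hn : 0 < n) (hnq : n ≤ q - 1) (hδ : δ ≤ n - 1)
    (α : F) (hord : n ≤ orderOf α) :
    (Finset.range n).gcd
      (fun j => ∑ ν ∈ Finset.range (δ + 1), (Polynomial.C (α ^ j) * Polynomial.X) ^ ν) = 1 := by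
  set g : ℕ → F[X] :=
    fun j => ∑ ν ∈ Finset.range (δ + 1), (Polynomial.C (α ^ j) * Polynomial.X) ^ ν with hg
  set d : F[X] := (Finset.range n).gcd g with hd
  rw [hd, ← Finset.normalize_gcd, normalize_eq_one, ← hd]
  by_contra hu
  classical
  -- work in the algebraic closure
  set K := AlgebraicClosure F
  set φ : F →+* K := algebraMap F K with hφ
  have hφinj : Function.Injective φ := φ.injective
  have hdeg : (d.map φ).degree ≠ 0 := by
    intro h
    have hdd : d.degree = 0 := by
      rwa [Polynomial.degree_map_eq_of_injective hφinj] at h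
    exact hu (Polynomial.isUnit_iff_degree_eq_zero.mpr hdd)
  obtain ⟨x, hx⟩ := IsAlgClosed.exists_root (d.map φ) hdeg
  -- x is a common root of all the (mapped) g_j
  have hroot : ∀ j ∈ Finset.range n, ((g j).map φ).eval x = 0 := by
    intro j hj
    have hdvd : d ∣ g j := Finset.gcd_dvd hj
    obtain ⟨c, hc⟩ := hdvd
    rw [hc, Polynomial.map_mul, Polynomial.eval_mul, hx.eq_zero, zero_mul]
  -- the auxiliary polynomial h(t) = ∑ x^ν t^ν
  set h : K[X] := ∑ ν ∈ Finset.range (δ + 1), Polynomial.C (x ^ ν) * Polynomial.X ^ ν with hh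
  have heval : ∀ j ∈ Finset.range n, h.eval (φ α ^ j) = 0 := by
    intro j hj
    have := hroot j hj
    rw [hg] at this
    rw [Polynomial.eval_map] at this
    simp only [Polynomial.eval₂_finset_sum, Polynomial.eval₂_pow, Polynomial.eval₂_mul,
      Polynomial.eval₂_C, Polynomial.eval₂_X, map_pow] at this
    rw [hh]
    simp only [Polynomial.eval_finset_sum, Polynomial.eval_mul, Polynomial.eval_C,
      Polynomial.eval_pow, Polynomial.eval_X]
    rw [← this]
    exact Finset.sum_congr rfl (fun ν _ => by ring)
  -- the evaluation points are pairwise distinct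
  have hordK : n ≤ orderOf (φ α) := by
    have := orderOf_injective φ.toMonoidHom hφinj α
    calc n ≤ orderOf α := hord
      _ = orderOf (φ α) := this.symm
  have hcardpts : ((Finset.range n).image (fun j => φ α ^ j)).card = n := by
    rw [Finset.card_image_of_injOn, Finset.card_range]
    intro i hi j hj hij
    simp only [Finset.coe_range, Set.mem_Iio] at hi hj
    exact pow_injOn_Iio_orderOf (Set.mem_Iio.mpr (lt_of_lt_of_le hi hordK))
      (Set.mem_Iio.mpr (lt_of_lt_of_le hj hordK)) hij
  -- h vanishes on n points but has degree < n, so h = 0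
  have hdegh : h.natDegree < n := by
    have : h.natDegree ≤ δ := by
      apply Polynomial.natDegree_sum_le_of_forall_le
      intro ν hν
      calc (Polynomial.C (x ^ ν) * Polynomial.X ^ ν).natDegree ≤ ν := by
            apply le_trans (Polynomial.natDegree_mul_le)
            simp [Polynomial.natDegree_X_pow]
        _ ≤ δ := Nat.lt_succ_iff.mp (Finset.mem_range.mp hν)
    exact lt_of_le_of_lt this (lt_of_le_of_lt (le_refl δ)
      (Nat.lt_of_le_pred hn hδ))
  have h0 : h = 0 := by
    apply Polynomial.eq_zero_of_natDegree_lt_card_of_eval_eq_zero' h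
      ((Finset.range n).image (fun j => φ α ^ j))
    · intro y hy
      obtain ⟨j, hj, rfl⟩ := Finset.mem_image.mp hy
      exact heval j hj
    · rwa [hcardpts]
  -- but the constant coefficient of h is 1
  have hc0 : h.coeff 0 = 1 := by
    rw [hh, Polynomial.finset_sum_coeff]
    rw [Finset.sum_eq_single 0]
    · simp
    · intro ν _ hν
      rw [Polynomial.coeff_C_mul, Polynomial.coeff_X_pow, if_neg (by omega), mul_zero]
    · simp
  rw [h0] at hc0
  simp at hc0
end

section
/- Let F be a field and α ∈ F a nonzero element of multiplicative order at least n. For 0 ≤ s ≤ s+r ≤ n−1, the (r+1)×n matrix R with rows (1, α^{s+i}, α^{2(s+i)}, …, α^{(n−1)(s+i)}) for i = 0,…,r generates an MDS block code: every nonzero F-linear combination of the rows of R has Hamming weight at least n−r. -/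
open Polynomial

/-- If `α` is a nonzero element of a field `F` of multiplicative order at
least `n`, and `0 ≤ s ≤ s + r ≤ n - 1`, then every nonzero `F`-linear combination of the
rows `(1, α^{s+i}, α^{2(s+i)}, …, α^{(n-1)(s+i)})`, `i = 0, …, r`, has Hamming weight at
least `n - r`, i.e. the matrix `R` generates an MDS block code. -/
theorem stmt1 (F : Type*) [Field F] [DecidableEq F] (n r s : ℕ) (hn : 0 < n)
    (hrs : s + r ≤ n - 1)
    (α : F) (hα : α ≠ 0) (hord : ∀ m : ℕ, 0 < m → m < n → α ^ m ≠ 1)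
    (u : Fin (r + 1) → F) (hu : u ≠ 0) :
    n - r ≤ (Finset.univ.filter
      (fun j : Fin n => (∑ i : Fin (r + 1), u i * α ^ ((s + (i : ℕ)) * (j : ℕ))) ≠ 0)).card := by
  classical
  set p : F[X] := ∑ i : Fin (r + 1), Polynomial.C (u i) * Polynomial.X ^ (i : ℕ) with hp
  -- coefficients of p
  have hcoeff : ∀ i : Fin (r + 1), p.coeff (i : ℕ) = u i := by
    intro i
    rw [hp, Polynomial.finset_sum_coeff]
    rw [Finset.sum_eq_single i]
    · simp
    · intro k _ hk
      have : (k : ℕ) ≠ (i : ℕ) := fun h => hk (Fin.ext h)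
      simp only [Polynomial.coeff_C_mul, Polynomial.coeff_X_pow]
      simp [this.symm]
    · simp
  have hpne : p ≠ 0 := by
    obtain ⟨i, hi⟩ := Function.ne_iff.mp hu
    intro h
    apply hi
    have := hcoeff i
    rw [h] at this
    simpa using this.symm
  have hdeg : p.natDegree ≤ r := by
    apply Polynomial.natDegree_sum_le_of_forall_le
    intro i _
    refine le_trans (Polynomial.natDegree_C_mul_le _ _) ?_
    simpa using (Nat.lt_succ_iff.mp i.isLt)
  -- injectivity of j ↦ α^j on Fin n
  have hinj : ∀ j k : Fin n, α ^ (j : ℕ) = α ^ (k : ℕ) → j = k := by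
    have key : ∀ j k : Fin n, (j : ℕ) < (k : ℕ) → α ^ (j : ℕ) ≠ α ^ (k : ℕ) := by
      intro j k hlt heq
      have h1 : α ^ (k : ℕ) = α ^ (j : ℕ) * α ^ ((k : ℕ) - (j : ℕ)) := by
        rw [← pow_add]
        congr 1
        omega
      have h2 : α ^ ((k : ℕ) - (j : ℕ)) = 1 := by
        have hj : α ^ (j : ℕ) ≠ 0 := pow_ne_zero _ hα
        rw [heq] at h1
        nth_rewrite 1 [show α ^ (k : ℕ) = α ^ (k : ℕ) * 1 by ring] at h1
        exact (mul_left_cancel₀ (pow_ne_zero _ hα) h1).symm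
      exact hord _ (by omega) (by omega) h2
    intro j k heq
    rcases lt_trichotomy (j : ℕ) (k : ℕ) with h | h | h
    · exact absurd heq (key j k h)
    · exact Fin.ext h
    · exact absurd heq.symm (key k j h)
  -- the sum equals α^(s*j) * p.eval (α^j)
  have heval : ∀ j : Fin n,
      (∑ i : Fin (r + 1), u i * α ^ ((s + (i : ℕ)) * (j : ℕ)))
        = α ^ (s * (j : ℕ)) * p.eval (α ^ (j : ℕ)) := by
    intro j
    rw [hp, Polynomial.eval_finset_sum, Finset.mul_sum]
    apply Finset.sum_congr rfl
    intro i _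
    simp only [Polynomial.eval_mul, Polynomial.eval_C, Polynomial.eval_pow,
      Polynomial.eval_X, ← pow_mul]
    rw [add_mul]
    rw [pow_add]
    ring_nf
  -- the zero set injects into roots
  set Z := Finset.univ.filter
      (fun j : Fin n => (∑ i : Fin (r + 1), u i * α ^ ((s + (i : ℕ)) * (j : ℕ))) = 0) with hZ
  have hZcard : Z.card ≤ r := by
    have h1 : Z.card ≤ p.roots.toFinset.card := by
      refine Finset.card_le_card_of_injOn (fun j => α ^ (j : ℕ)) ?_ ?_
      · intro j hj
        rw [hZ, Finset.mem_coe, Finset.mem_filter] at hj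
        have h0 := hj.2
        rw [heval j] at h0
        have hs : α ^ (s * (j : ℕ)) ≠ 0 := pow_ne_zero _ hα
        have : p.eval (α ^ (j : ℕ)) = 0 := by
          rcases mul_eq_zero.mp h0 with h | h
          · exact absurd h hs
          · exact h
        simp only [Finset.mem_coe, Multiset.mem_toFinset, Polynomial.mem_roots hpne]
        exact this
      · intro j _ k _ h
        exact hinj j k h
    calc Z.card ≤ p.roots.toFinset.card := h1
      _ ≤ Multiset.card p.roots := p.roots.toFinset_card_le
      _ ≤ p.natDegree := p.card_roots'
      _ ≤ r := hdeg
  have hsplit : (Finset.univ.filter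
      (fun j : Fin n => (∑ i : Fin (r + 1), u i * α ^ ((s + (i : ℕ)) * (j : ℕ))) ≠ 0)).card
      + Z.card = n := by
    have h := Finset.card_filter_add_card_filter_not
      (s := (Finset.univ : Finset (Fin n)))
      (p := fun j : Fin n => (∑ i : Fin (r + 1), u i * α ^ ((s + (i : ℕ)) * (j : ℕ))) ≠ 0)
    simp only [not_not] at h
    rw [hZ]
    simpa using h
  omega
end

section
/- If C ⊆ F_q[z]^n is a one-dimensional convolutional code of overall constraint length δ whose free distance equals the generalized Singleton bound n(δ+1) (i.e., C is an (n,1,δ) MDS convolutional code), then q ≥ δ+1. -/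
open Polynomial

open Finset in
/-- If `C = im G ⊆ F_q[z]^n` is a one-dimensional convolutional code
(`G` right-invertible) of overall constraint length `δ` (the maximal degree of the
entries of `G`) whose free distance equals the generalized Singleton bound `n(δ+1)`
— i.e. every nonzero codeword has weight `≥ n(δ+1)` and this value is attained —
then `q ≥ δ + 1`. -/
theorem stmt4 (F : Type*) [Field F] [Fintype F] (n δ : ℕ) (hn : 0 < n)
    (G : Fin n → Polynomial F)
    (hrinv : ∃ H : Fin n → Polynomial F, ∑ j, G j * H j = 1)
    (hdeg : ∀ j, (G j).natDegree ≤ δ) (hdeg' : ∃ j, (G j).natDegree = δ)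
    (hlow : ∀ u : Polynomial F, u ≠ 0 → n * (δ + 1) ≤ ∑ j, (u * G j).support.card)
    (hattain : ∃ u : Polynomial F, u ≠ 0 ∧ (∑ j, (u * G j).support.card) = n * (δ + 1)) :
    δ + 1 ≤ Fintype.card F := by
  classical
  set q := Fintype.card F with hq
  have hq1 : 1 ≤ q := Fintype.card_pos
  -- Step 1: every coefficient of G j in degrees 0..δ is nonzero
  have hsub : ∀ j, (G j).support ⊆ range (δ + 1) := by
    intro j
    exact Finset.Subset.trans supp_subset_range_natDegree_succ
      (range_subset_range.2 (Nat.succ_le_succ (hdeg j)))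
  have hcard_le : ∀ j, (G j).support.card ≤ δ + 1 := by
    intro j
    simpa using card_le_card (hsub j)
  have h1 := hlow 1 one_ne_zero
  simp only [one_mul] at h1
  have heach : ∀ j, (G j).support.card = δ + 1 := by
    intro j
    by_contra hne
    have hlt : (G j).support.card < δ + 1 := lt_of_le_of_ne (hcard_le j) hne
    have hstrict : ∑ j, (G j).support.card < ∑ _j : Fin n, (δ + 1) :=
      Finset.sum_lt_sum (fun i _ => hcard_le i) ⟨j, mem_univ j, hlt⟩
    simp only [Finset.sum_const, card_univ, Fintype.card_fin, smul_eq_mul] at hstrict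
    omega
  have hsupp : ∀ j, (G j).support = range (δ + 1) := by
    intro j
    refine Finset.eq_of_subset_of_card_le (hsub j) ?_
    rw [card_range, heach j]
  have hcoeff : ∀ j i, i ≤ δ → (G j).coeff i ≠ 0 := by
    intro j i hi
    have : i ∈ (G j).support := by
      rw [hsupp j]; exact mem_range.2 (Nat.lt_succ_of_le hi)
    exact mem_support_iff.1 this
  have hcoeff' : ∀ j i, δ < i → (G j).coeff i = 0 := fun j i hi =>
    coeff_eq_zero_of_natDegree_lt (lt_of_le_of_lt (hdeg j) hi)
  -- fiber-count sets
  set W : Fin n → F → Finset ℕ := fun j a =>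
    (range δ).filter (fun i => (G j).coeff i = a * (G j).coeff (i + 1)) with hW
  -- Step 2: weight of (X - C a) * G j
  have key : ∀ (a : F), a ≠ 0 → ∀ j,
      ((X - C a) * G j).support.card = (δ + 2) - (W j a).card := by
    intro a ha j
    set P := (X - C a) * G j with hP
    have hc0 : P.coeff 0 = -(a * (G j).coeff 0) := by
      rw [hP, sub_mul, coeff_sub, coeff_C_mul]
      simp [coeff_X_zero, mul_coeff_zero]
    have hcS : ∀ i, P.coeff (i + 1) = (G j).coeff i - a * (G j).coeff (i + 1) := by
      intro i
      rw [hP, sub_mul, coeff_sub, coeff_C_mul, coeff_X_mul]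
    have hPdeg : P.natDegree ≤ δ + 1 := by
      refine natDegree_mul_le.trans ?_
      rw [natDegree_X_sub_C]
      have := hdeg j
      omega
    have hPsub : P.support ⊆ range (δ + 2) :=
      Finset.Subset.trans supp_subset_range_natDegree_succ (range_subset_range.2 (by omega))
    have hsplit : ((range (δ + 2)).filter (fun m => P.coeff m = 0)).card
        + P.support.card = δ + 2 := by
      have h2 : (range (δ + 2)).filter (fun m => ¬ P.coeff m = 0) = P.support := by
        ext m
        simp only [mem_filter, mem_range, mem_support_iff]
        exact ⟨fun h => h.2, fun h =>
          ⟨mem_range.1 (hPsub (mem_support_iff.2 h)), h⟩⟩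
      have h3 := Finset.card_filter_add_card_filter_not
        (s := range (δ + 2)) (p := fun m => P.coeff m = 0)
      rw [h2, card_range] at h3
      exact h3
    have hZ : (range (δ + 2)).filter (fun m => P.coeff m = 0)
        = (W j a).image (· + 1) := by
      ext m
      simp only [mem_filter, mem_range, mem_image, hW]
      constructor
      · rintro ⟨hm, h0⟩
        match m with
        | 0 =>
          rw [hc0] at h0
          exact absurd h0 (neg_ne_zero.2 (mul_ne_zero ha (hcoeff j 0 (Nat.zero_le δ))))
        | (i + 1) =>
          rw [hcS] at h0
          have hci : (G j).coeff i = a * (G j).coeff (i + 1) := sub_eq_zero.1 h0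
          have hiδ : i < δ := by
            by_contra hge
            have hiδ' : i = δ := by omega
            rw [hiδ'] at hci
            rw [hcoeff' j (δ + 1) (by omega), mul_zero] at hci
            exact hcoeff j δ le_rfl hci
          exact ⟨i, ⟨hiδ, hci⟩, rfl⟩
      · rintro ⟨i, ⟨hiδ, hci⟩, rfl⟩
        refine ⟨by omega, ?_⟩
        rw [hcS, hci, sub_self]
    have hinj : ((W j a).image (· + 1)).card = (W j a).card :=
      Finset.card_image_of_injective _ (fun x y h => by omega)
    rw [hZ, hinj] at hsplit
    omega
  -- Step 3: for each a ≠ 0, the fiber counts sum to at most n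
  have hsumle : ∀ a : F, a ≠ 0 → ∑ j, (W j a).card ≤ n := by
    intro a ha
    have h := hlow (X - C a) (X_sub_C_ne_zero a)
    have hrw : ∑ j, ((X - C a) * G j).support.card
        = ∑ j, ((δ + 2) - (W j a).card) :=
      Finset.sum_congr rfl fun j _ => key a ha j
    rw [hrw] at h
    have hWle : ∀ j, (W j a).card ≤ δ + 2 := by
      intro j
      refine le_trans (Finset.card_filter_le _ _) ?_
      rw [card_range]; omega
    have hsum : ∑ j, ((δ + 2) - (W j a).card) + ∑ j, (W j a).card = n * (δ + 2) := by
      rw [← Finset.sum_add_distrib]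
      have hpt : ∀ j ∈ (univ : Finset (Fin n)),
          (δ + 2) - (W j a).card + (W j a).card = δ + 2 := fun j _ =>
        Nat.sub_add_cancel (hWle j)
      rw [Finset.sum_congr rfl hpt]
      simp [mul_comm]
    have hmul : n * (δ + 2) = n * (δ + 1) + n := by ring
    omega
  -- Step 4: for each j the fibers partition range δ
  have hfiber : ∀ j, ∑ a ∈ (univ : Finset F).erase 0, (W j a).card = δ := by
    intro j
    have hmap : ∀ i ∈ range δ,
        (G j).coeff i / (G j).coeff (i + 1) ∈ (univ : Finset F).erase 0 := by
      intro i hi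
      have hi' := mem_range.1 hi
      refine mem_erase.2 ⟨?_, mem_univ _⟩
      exact div_ne_zero (hcoeff j i (le_of_lt hi')) (hcoeff j (i + 1) hi')
    have hcb := Finset.card_eq_sum_card_fiberwise hmap
    rw [card_range] at hcb
    rw [hcb]
    refine Finset.sum_congr rfl fun a _ => ?_
    congr 1
    refine Finset.filter_congr fun i hi => ?_
    have hi' := mem_range.1 hi
    rw [div_eq_iff (hcoeff j (i + 1) hi'), eq_comm]
  -- Step 5: combine
  have hmain : n * δ ≤ (q - 1) * n := by
    calc n * δ = ∑ _j : Fin n, δ := by simp [mul_comm]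
    _ = ∑ j : Fin n, ∑ a ∈ (univ : Finset F).erase 0, (W j a).card :=
        Finset.sum_congr rfl fun j _ => (hfiber j).symm
    _ = ∑ a ∈ (univ : Finset F).erase 0, ∑ j, (W j a).card := Finset.sum_comm
    _ ≤ ∑ _a ∈ (univ : Finset F).erase 0, n :=
        Finset.sum_le_sum fun a ha => hsumle a (mem_erase.1 ha).1
    _ = (q - 1) * n := by
        rw [Finset.sum_const, smul_eq_mul, card_erase_of_mem (mem_univ 0), card_univ]
  have hδ : δ ≤ q - 1 := by
    have h2 : n * δ ≤ n * (q - 1) := by rwa [mul_comm (q - 1) n] at hmain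
    exact Nat.le_of_mul_le_mul_left h2 hn
  omega
end

section
/- Let F be a finite field, n ≥ 1 with ord(α) ≥ n, 0 < δ ≤ n−1, and G(z) as in the MDS construction. For every j ≥ δ+1 and every u ∈ F[z] with u_0 ≠ 0, deg u = j−δ−1, and no δ consecutive coefficients of u all zero, the codeword uG has weight at least (n−δ)j + δ(δ+1). Hence the j-th extended row distance of C = im G satisfies d̂^r_j ≥ (n−δ)j + δ(δ+1). -/
open Polynomial

lemma aux1 {F : Type*} [CommSemiring F] (m k : ℕ) (u : Polynomial F) (c : ℕ → F) :
    (u * ∑ ν ∈ Finset.range m, C (c ν) * X ^ ν).coeff k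
      = ∑ ν ∈ Finset.range m, if ν ≤ k then u.coeff (k - ν) * c ν else 0 := by
  rw [Finset.mul_sum, finset_sum_coeff]
  refine Finset.sum_congr rfl fun ν _ => ?_
  rw [show u * (C (c ν) * X ^ ν) = (u * C (c ν)) * X ^ ν by ring, coeff_mul_X_pow',
    coeff_mul_C]

/-- extended row distances of the MDS construction.  Let `F` be a finite
field, `α ∈ F` with `ord(α) ≥ n`, `0 < δ ≤ n - 1`, and `G(z)` with `j`-th entry
`Σ_{ν=0}^{δ} (α^j z)^ν`.  For every `j ≥ δ + 1` and every `u ∈ F[z]` with `u_0 ≠ 0`,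
`deg u = j - δ - 1`, and no `δ` consecutive coefficients of `u` all zero, the codeword
`uG` has weight at least `(n - δ)j + δ(δ+1)`; hence the `j`-th extended row distance
satisfies `d̂^r_j ≥ (n - δ)j + δ(δ+1)`. -/
theorem stmt5 (F : Type*) [Field F] [Fintype F] (n δ : ℕ) (hn : 0 < n)
    (hδ0 : 0 < δ) (hδ : δ ≤ n - 1)
    (α : F) (hord : n ≤ orderOf α)
    (j : ℕ) (hj : δ + 1 ≤ j)
    (u : Polynomial F) (hu0 : u.coeff 0 ≠ 0) (hudeg : u.natDegree = j - δ - 1)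
    (hgap : ∀ i : ℕ, i + δ ≤ u.natDegree + 1 → ∃ l < δ, u.coeff (i + l) ≠ 0) :
    (n - δ) * j + δ * (δ + 1) ≤ ∑ t : Fin n,
      (u * ∑ ν ∈ Finset.range (δ + 1),
        Polynomial.C (α ^ ((t : ℕ) * ν)) * Polynomial.X ^ ν).support.card := by
  classical
  set D := u.natDegree with hDdef
  have hjD : j = D + δ + 1 := by omega
  have hune : u ≠ 0 := fun h => hu0 (by rw [h, coeff_zero])
  have hlead : u.coeff D ≠ 0 := by
    rw [hDdef]
    exact mt Polynomial.leadingCoeff_eq_zero.mp hune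
  have hαpos : 0 < orderOf α := lt_of_lt_of_le hn hord
  have hα : α ≠ 0 := by
    have hu : IsUnit α := by
      refine IsUnit.of_mul_eq_one (a := α) (α ^ (orderOf α - 1)) ?_
      rw [← pow_succ', Nat.sub_add_cancel hαpos]
      exact pow_orderOf_eq_one α
    exact hu.ne_zero
  have hxne : ∀ t : ℕ, α ^ t ≠ 0 := fun t => pow_ne_zero t hα
  have hkey : ∀ s t : Fin n, (s : ℕ) < t → α ^ (s : ℕ) = α ^ (t : ℕ) → False := by
    intro s t hlt hst
    have h1 : α ^ ((t : ℕ) - s) = 1 := by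
      rw [pow_sub₀ α hα hlt.le, ← hst, mul_inv_cancel₀ (hxne s)]
    have h2 := Nat.le_of_dvd (by omega) (orderOf_dvd_of_pow_eq_one h1)
    have h3 := t.isLt
    omega
  have hinj : ∀ s t : Fin n, α ^ (s : ℕ) = α ^ (t : ℕ) → s = t := by
    intro s t hst
    rcases lt_trichotomy (s : ℕ) (t : ℕ) with h | h | h
    · exact (hkey s t h hst).elim
    · exact Fin.ext h
    · exact (hkey t s h hst.symm).elim
  -- the per-coefficient counting bound
  have key : ∀ k ∈ Finset.range j,
      (n - δ) + ((δ - k) + (k - D)) ≤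
        (Finset.univ.filter (fun t : Fin n => (u * ∑ ν ∈ Finset.range (δ + 1),
          Polynomial.C (α ^ ((t : ℕ) * ν)) * Polynomial.X ^ ν).coeff k ≠ 0)).card := by
    intro k hk
    rw [Finset.mem_range] at hk
    set a := k - D with hadef
    have haδ : a ≤ δ := by omega
    have hak : a ≤ k := by omega
    set Q : Polynomial F := ∑ ν ∈ Finset.range (δ + 1 - a),
      (if a + ν ≤ k then C (u.coeff (k - (a + ν))) else 0) * X ^ ν with hQdef
    have hQc : ∀ μ : ℕ, Q.coeff μ = if μ ∈ Finset.range (δ + 1 - a)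
        then (if a + μ ≤ k then u.coeff (k - (a + μ)) else 0) else 0 := by
      intro μ
      rw [hQdef, finset_sum_coeff]
      rw [Finset.sum_congr rfl (fun ν _ => by
        rw [show (if a + ν ≤ k then C (u.coeff (k - (a + ν))) else (0 : Polynomial F))
            = C (if a + ν ≤ k then u.coeff (k - (a + ν)) else 0) from by split <;> simp,
          coeff_C_mul, coeff_X_pow])]
      simp only [mul_ite, mul_one, mul_zero, Finset.sum_ite_eq]
  -- Q ≠ 0
    have hQne : Q ≠ 0 := by
      rcases le_or_gt k δ with hkδ | hkδ
      · -- coefficient at k - a is u.coeff 0 ≠ 0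
        intro h
        have := hQc (k - a)
        rw [h] at this
        simp only [coeff_zero] at this
        rw [if_pos (by simp [Finset.mem_range]; omega), if_pos (by omega)] at this
        rw [show k - (a + (k - a)) = 0 by omega] at this
        exact hu0 this.symm
      · rcases le_or_gt D k with hDk | hDk
        · -- coefficient at 0 is u.coeff D ≠ 0
          intro h
          have := hQc 0
          rw [h] at this
          simp only [coeff_zero] at this
          rw [if_pos (by simp [Finset.mem_range]; omega), if_pos (by omega)] at this
          rw [show k - (a + 0) = D by omega] at this
          exact hlead this.symm
        · -- δ < k < D : use the gap hypothesis
          obtain ⟨l, hl, hul⟩ := hgap (k - δ) (by omega)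
          intro h
          have := hQc (δ - l)
          rw [h] at this
          simp only [coeff_zero] at this
          have ha0 : a = 0 := by omega
          rw [if_pos (by simp [Finset.mem_range]; omega), if_pos (by omega)] at this
          rw [show k - (a + (δ - l)) = k - δ + l by omega] at this
          exact hul this.symm
    have hQdeg : Q.natDegree ≤ min k δ - a := by
      refine natDegree_sum_le_of_forall_le _ _ fun ν hν => ?_
      rw [Finset.mem_range] at hν
      split
      · exact (natDegree_C_mul_X_pow_le _ _).trans (by omega)
      · simp
    -- coefficient formula
    have hcoeff : ∀ t : Fin n,
        (u * ∑ ν ∈ Finset.range (δ + 1),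
          Polynomial.C (α ^ ((t : ℕ) * ν)) * Polynomial.X ^ ν).coeff k
          = (α ^ (t : ℕ)) ^ a * Q.eval (α ^ (t : ℕ)) := by
      intro t
      rw [aux1]
      rw [hQdef, eval_finset_sum, Finset.mul_sum]
      have hterm : ∀ ν ∈ Finset.range (δ + 1 - a),
          (α ^ (t : ℕ)) ^ a *
            ((if a + ν ≤ k then C (u.coeff (k - (a + ν))) else 0) * X ^ ν).eval (α ^ (t : ℕ))
          = (if a + ν ≤ k then u.coeff (k - (a + ν)) * α ^ ((t : ℕ) * (a + ν)) else 0) := by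
        intro ν _
        split
        · simp [pow_mul, pow_add]; ring
        · simp
      rw [Finset.sum_congr rfl hterm]
      have h1 : ∑ ν ∈ Finset.range (δ + 1 - a),
          (if a + ν ≤ k then u.coeff (k - (a + ν)) * α ^ ((t : ℕ) * (a + ν)) else 0)
          = ∑ μ ∈ Finset.Ico a (δ + 1),
            (if μ ≤ k then u.coeff (k - μ) * α ^ ((t : ℕ) * μ) else 0) := by
        rw [Finset.sum_Ico_eq_sum_range]
      rw [h1]
      refine (Finset.sum_subset (fun x hx => ?_) (fun x hx hxn => ?_)).symm
      · rw [Finset.mem_Ico] at hx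
        rw [Finset.mem_range]
        omega
      · rw [Finset.mem_range] at hx
        rw [Finset.mem_Ico] at hxn
        have hxa : x < a := by omega
        have : u.coeff (k - x) = 0 := coeff_eq_zero_of_natDegree_lt (by omega)
        simp [this]
    -- count zeros
    have hzero : (Finset.univ.filter (fun t : Fin n => (u * ∑ ν ∈ Finset.range (δ + 1),
          Polynomial.C (α ^ ((t : ℕ) * ν)) * Polynomial.X ^ ν).coeff k = 0)).card
        ≤ min k δ - a := by
      have hsub : ∀ t ∈ (Finset.univ.filter (fun t : Fin n => (u * ∑ ν ∈ Finset.range (δ + 1),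
          Polynomial.C (α ^ ((t : ℕ) * ν)) * Polynomial.X ^ ν).coeff k = 0)),
          α ^ (t : ℕ) ∈ Q.roots.toFinset := by
        intro t ht
        rw [Finset.mem_filter] at ht
        rw [Multiset.mem_toFinset, mem_roots hQne]
        have h0 := ht.2
        rw [hcoeff t] at h0
        exact (mul_eq_zero.mp h0).resolve_left (pow_ne_zero a (hxne t))
      calc _ ≤ Q.roots.toFinset.card :=
            Finset.card_le_card_of_injOn (fun t : Fin n => α ^ (t : ℕ)) hsub
              (fun s₁ _ s₂ _ h => hinj s₁ s₂ h)
        _ ≤ Multiset.card Q.roots := Multiset.toFinset_card_le _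
        _ ≤ Q.natDegree := card_roots' Q
        _ ≤ min k δ - a := hQdeg
    have hsplit := Finset.card_filter_add_card_filter_not
      (s := (Finset.univ : Finset (Fin n)))
      (p := fun t : Fin n => (u * ∑ ν ∈ Finset.range (δ + 1),
        Polynomial.C (α ^ ((t : ℕ) * ν)) * Polynomial.X ^ ν).coeff k = 0)
    rw [Finset.card_univ, Fintype.card_fin] at hsplit
    simp only [ne_eq]
    rcases Nat.le_total k δ with h | h
    · rw [min_eq_left h] at hzero; omega
    · rw [min_eq_right h] at hzero; omega
  -- assemble
  have e1 : ∑ k ∈ Finset.range (δ + 1), (δ - k) = ∑ k ∈ Finset.range j, (δ - k) :=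
    Finset.sum_subset (Finset.range_subset_range.mpr hj)
      (fun x _ hx => by rw [Finset.mem_range] at hx; omega)
  have e2 : ∑ k ∈ Finset.range (δ + 1), (δ - k) = ∑ k ∈ Finset.range (δ + 1), k := by
    simpa using Finset.sum_range_reflect (fun i => i) (δ + 1)
  have e3 : ∑ k ∈ Finset.range j, (k - D) = ∑ i ∈ Finset.range (δ + 1), i := by
    have s1 : ∑ k ∈ Finset.Ico D j, (k - D) = ∑ k ∈ Finset.range j, (k - D) :=
      Finset.sum_subset
        (fun x hx => by rw [Finset.mem_Ico] at hx; rw [Finset.mem_range]; omega)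
        (fun x hx hxn => by
          rw [Finset.mem_range] at hx; rw [Finset.mem_Ico] at hxn; omega)
    rw [← s1, Finset.sum_Ico_eq_sum_range]
    have : j - D = δ + 1 := by omega
    rw [this]
    exact Finset.sum_congr rfl fun i _ => by omega
  have hT : δ * (δ + 1) = (∑ i ∈ Finset.range (δ + 1), i) * 2 := by
    rw [Finset.sum_range_id_mul_two, Nat.add_sub_cancel]; ring
  calc (n - δ) * j + δ * (δ + 1)
      ≤ ∑ k ∈ Finset.range j, ((n - δ) + ((δ - k) + (k - D))) := by
        rw [Finset.sum_add_distrib, Finset.sum_add_distrib, Finset.sum_const,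
          Finset.card_range, smul_eq_mul, ← e1, e2, e3, hT, Nat.mul_comm (n - δ) j]
        omega
    _ ≤ ∑ k ∈ Finset.range j,
          (Finset.univ.filter (fun t : Fin n => (u * ∑ ν ∈ Finset.range (δ + 1),
            Polynomial.C (α ^ ((t : ℕ) * ν)) * Polynomial.X ^ ν).coeff k ≠ 0)).card :=
        Finset.sum_le_sum key
    _ = ∑ k ∈ Finset.range j, ∑ t : Fin n,
          (if (u * ∑ ν ∈ Finset.range (δ + 1),
            Polynomial.C (α ^ ((t : ℕ) * ν)) * Polynomial.X ^ ν).coeff k ≠ 0 then 1 else 0) := by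
        refine Finset.sum_congr rfl fun k _ => ?_
        rw [Finset.card_filter]
    _ = ∑ t : Fin n, ∑ k ∈ Finset.range j,
          (if (u * ∑ ν ∈ Finset.range (δ + 1),
            Polynomial.C (α ^ ((t : ℕ) * ν)) * Polynomial.X ^ ν).coeff k ≠ 0 then 1 else 0) :=
        Finset.sum_comm
    _ = ∑ t : Fin n, ((Finset.range j).filter (fun k => (u * ∑ ν ∈ Finset.range (δ + 1),
          Polynomial.C (α ^ ((t : ℕ) * ν)) * Polynomial.X ^ ν).coeff k ≠ 0)).card := by
        refine Finset.sum_congr rfl fun t _ => ?_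
        rw [Finset.card_filter]
    _ ≤ ∑ t : Fin n, (u * ∑ ν ∈ Finset.range (δ + 1),
          Polynomial.C (α ^ ((t : ℕ) * ν)) * Polynomial.X ^ ν).support.card := by
        refine Finset.sum_le_sum fun t _ => Finset.card_le_card fun k hk => ?_
        rw [Finset.mem_filter] at hk
        rw [mem_support_iff]
        exact hk.2
end

section
/- Let F be a field, α ∈ F with ord(α) = n, and define the (n−1)×n matrix H over F[z] with entries H_{j,ν} = (z − α^{n−ν+1})^j for j = 1,…,n−1 and ν = 1,…,n (columns indexed so the ν-th column uses the linear factor z − α^{n−ν+1}). Then G·H^T = 0, where G = Σ_{ν=0}^{n−1} z^ν (1, α^ν, …, α^{(n−1)ν}). -/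
open Polynomial

lemma aux_sum_pow {F : Type*} [Field F] (n : ℕ) (α : F) (hord : orderOf α = n)
    (m : ℕ) (hm1 : 1 ≤ m) (hm2 : m < n) :
    ∑ ν ∈ Finset.Icc 1 n, (α ^ (n - ν + 1)) ^ m = 0 := by
  have hαn : α ^ n = 1 := by rw [← hord]; exact pow_orderOf_eq_one α
  have hb1 : α ^ m ≠ 1 := by
    intro h
    have h2 := orderOf_dvd_of_pow_eq_one h
    rw [hord] at h2
    exact absurd (Nat.le_of_dvd (by omega) h2) (by omega)
  have key : (∑ i ∈ Finset.range n, (α ^ m) ^ i) = 0 := by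
    have h := geom_sum_mul (α ^ m) n
    rw [← pow_mul, mul_comm m n, pow_mul, hαn, one_pow, sub_self] at h
    have hne : α ^ m - 1 ≠ 0 := sub_ne_zero.mpr hb1
    exact (mul_eq_zero.mp h).resolve_right hne
  calc ∑ ν ∈ Finset.Icc 1 n, (α ^ (n - ν + 1)) ^ m
      = ∑ i ∈ Finset.range n, (α ^ m) ^ (n - i) := by
        rw [← Finset.Ico_add_one_right_eq_Icc, Finset.sum_Ico_eq_sum_range]
        apply Finset.sum_congr (by norm_num)
        intro i hi
        simp only [Finset.mem_range] at hi
        rw [← pow_mul, mul_comm, pow_mul]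
        congr 2
        omega
    _ = ∑ i ∈ Finset.range n, (α ^ m) ^ (i + 1) := by
        rw [← Finset.sum_range_reflect]
        apply Finset.sum_congr rfl
        intro i hi
        simp only [Finset.mem_range] at hi
        congr 1
        omega
    _ = (α ^ m) * ∑ i ∈ Finset.range n, (α ^ m) ^ i := by
        rw [Finset.mul_sum]
        exact Finset.sum_congr rfl fun i _ => by ring
    _ = 0 := by rw [key, mul_zero]

/-- Let `α ∈ F` have multiplicative order exactly `n`, and let
`H ∈ F[z]^{(n-1)×n}` be the Vandermonde-type matrix with `(j,ν)` entry
`(z - α^{n-ν+1})^j` (`j = 1, …, n-1`, `ν = 1, …, n`).  Then `G · Hᵀ = 0` for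
`G = Σ_{ν=0}^{n-1} z^ν (1, α^ν, …, α^{(n-1)ν})`, i.e. for every `j = 1, …, n-1`,
`Σ_{ν=1}^{n} G_ν(z) · (z - α^{n-ν+1})^j = 0`. -/
theorem stmt9 (F : Type*) [Field F] (n : ℕ) (α : F) (hord : orderOf α = n)
    (j : ℕ) (hj1 : 1 ≤ j) (hj2 : j ≤ n - 1) :
    ∑ ν ∈ Finset.Icc 1 n,
      (∑ μ ∈ Finset.range n, Polynomial.C (α ^ ((ν - 1) * μ)) * Polynomial.X ^ μ) *
        (Polynomial.X - Polynomial.C (α ^ (n - ν + 1))) ^ j = 0 := by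
  have hn2 : 2 ≤ n := by omega
  obtain ⟨i, rfl⟩ : ∃ i, j = i + 1 := ⟨j - 1, by omega⟩
  have hαn : α ^ n = 1 := by rw [← hord]; exact pow_orderOf_eq_one α
  -- Step 1: G_ν(X) * (X - C c_ν) = C c_ν * (X^n - 1)
  have step : ∀ ν ∈ Finset.Icc 1 n,
      (∑ μ ∈ Finset.range n, Polynomial.C (α ^ ((ν - 1) * μ)) * Polynomial.X ^ μ) *
        (Polynomial.X - Polynomial.C (α ^ (n - ν + 1)))
        = Polynomial.C (α ^ (n - ν + 1)) * (Polynomial.X ^ n - 1) := by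
    intro ν hν
    simp only [Finset.mem_Icc] at hν
    set c : F := α ^ (n - ν + 1) with hc
    set β : F := α ^ (ν - 1) with hβ
    have hcβ : c * β = 1 := by
      rw [hc, hβ, ← pow_add, show n - ν + 1 + (ν - 1) = n by omega, hαn]
    have hβn : β ^ n = 1 := by
      rw [hβ, ← pow_mul, mul_comm, pow_mul, hαn, one_pow]
    have hsum : (∑ μ ∈ Finset.range n, Polynomial.C (α ^ ((ν - 1) * μ)) * Polynomial.X ^ μ)
        = ∑ μ ∈ Finset.range n, (Polynomial.C β * Polynomial.X) ^ μ := by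
      apply Finset.sum_congr rfl
      intro μ _
      rw [mul_pow, ← C_pow, hβ, ← pow_mul]
    have hX : (Polynomial.X : F[X]) - Polynomial.C c
        = Polynomial.C c * (Polynomial.C β * Polynomial.X - 1) := by
      rw [mul_sub, mul_one, ← mul_assoc, ← C_mul, hcβ, C_1, one_mul]
    rw [hsum, hX, mul_left_comm, geom_sum_mul, mul_pow, ← C_pow, hβn, C_1, one_mul]
  -- Step 2: factor out (X^n - 1)
  have main : ∑ ν ∈ Finset.Icc 1 n,
      (∑ μ ∈ Finset.range n, Polynomial.C (α ^ ((ν - 1) * μ)) * Polynomial.X ^ μ) *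
        (Polynomial.X - Polynomial.C (α ^ (n - ν + 1))) ^ (i + 1)
      = (Polynomial.X ^ n - 1) * ∑ ν ∈ Finset.Icc 1 n,
          Polynomial.C (α ^ (n - ν + 1)) *
            (Polynomial.X - Polynomial.C (α ^ (n - ν + 1))) ^ i := by
    rw [Finset.mul_sum]
    apply Finset.sum_congr rfl
    intro ν hν
    calc (∑ μ ∈ Finset.range n, Polynomial.C (α ^ ((ν - 1) * μ)) * Polynomial.X ^ μ) *
          (Polynomial.X - Polynomial.C (α ^ (n - ν + 1))) ^ (i + 1)
        = ((∑ μ ∈ Finset.range n, Polynomial.C (α ^ ((ν - 1) * μ)) * Polynomial.X ^ μ) *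
            (Polynomial.X - Polynomial.C (α ^ (n - ν + 1)))) *
            (Polynomial.X - Polynomial.C (α ^ (n - ν + 1))) ^ i := by ring
      _ = (Polynomial.C (α ^ (n - ν + 1)) * (Polynomial.X ^ n - 1)) *
            (Polynomial.X - Polynomial.C (α ^ (n - ν + 1))) ^ i := by rw [step ν hν]
      _ = (Polynomial.X ^ n - 1) *
            (Polynomial.C (α ^ (n - ν + 1)) *
              (Polynomial.X - Polynomial.C (α ^ (n - ν + 1))) ^ i) := by ring
  rw [main]
  -- Step 3: the remaining sum vanishes
  have hzero : ∑ ν ∈ Finset.Icc 1 n,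
      Polynomial.C (α ^ (n - ν + 1)) *
        (Polynomial.X - Polynomial.C (α ^ (n - ν + 1))) ^ i = 0 := by
    have inner : ∀ ν, Polynomial.C (α ^ (n - ν + 1)) *
        (Polynomial.X - Polynomial.C (α ^ (n - ν + 1))) ^ i
        = ∑ m ∈ Finset.range (i + 1),
            (-1 : F[X]) ^ (m + i) * Polynomial.X ^ m *
              Polynomial.C ((α ^ (n - ν + 1)) ^ (i - m + 1)) * (i.choose m : F[X]) := by
      intro ν
      rw [sub_pow, Finset.mul_sum]
      apply Finset.sum_congr rfl
      intro m hm
      rw [C_pow, pow_succ]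
      simp only [map_mul, map_pow]
      ring
    rw [Finset.sum_congr rfl fun ν _ => inner ν, Finset.sum_comm]
    apply Finset.sum_eq_zero
    intro m hm
    simp only [Finset.mem_range] at hm
    have hz : ∑ ν ∈ Finset.Icc 1 n, (α ^ (n - ν + 1)) ^ (i - m + 1) = 0 :=
      aux_sum_pow n α hord (i - m + 1) (by omega) (by omega)
    calc ∑ ν ∈ Finset.Icc 1 n,
        (-1 : F[X]) ^ (m + i) * Polynomial.X ^ m *
          Polynomial.C ((α ^ (n - ν + 1)) ^ (i - m + 1)) * (i.choose m : F[X])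
        = (-1 : F[X]) ^ (m + i) * Polynomial.X ^ m *
            Polynomial.C (∑ ν ∈ Finset.Icc 1 n, (α ^ (n - ν + 1)) ^ (i - m + 1)) *
            (i.choose m : F[X]) := by
          rw [map_sum, Finset.mul_sum, Finset.sum_mul]
      _ = 0 := by rw [hz, map_zero, mul_zero, zero_mul]
  rw [hzero, mul_zero]
end

section
/- Let F be a field, α ∈ F with ord(α) = n, and H ∈ F[z]^{(n−1)×n} the matrix with (j,ν) entry (z − α^{n−ν+1})^j. For each j = 1,…,n, the determinant of the (n−1)×(n−1) submatrix H^{(j)} of H obtained by deleting the j-th column equals c_j · Π_{ν≠n−j+1, 1≤ν≤n} (z − α^ν) for some nonzero constant c_j ∈ F. -/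
open Polynomial

/-- Let `α ∈ F` have multiplicative order exactly `n = m + 1`, and let
`H ∈ F[z]^{(n-1)×n}` have `(j,ν)` entry `(z - α^{n-ν+1})^j` (rows `j = 1,…,n-1`
indexed here by `i : Fin m` via `j = i+1`, columns `ν = 1,…,n` indexed by `ν₀ : Fin (m+1)`
via `ν = ν₀+1`, so the factor is `z - α^{n-ν₀}`).  For each deleted column `j : Fin n`
(paper index `j+1`), the determinant of the remaining `(n-1)×(n-1)` submatrix equals
`c · Π_{ν ∈ {1,…,n} \ {n-j}} (z - α^ν)` for some nonzero constant `c ∈ F`. -/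
theorem stmt10 (F : Type*) [Field F] (m : ℕ) (α : F) (hord : orderOf α = m + 1)
    (j : Fin (m + 1)) :
    ∃ c : F, c ≠ 0 ∧
      Matrix.det ((Matrix.of fun (i : Fin m) (ν : Fin (m + 1)) =>
          (Polynomial.X - Polynomial.C (α ^ (m + 1 - (ν : ℕ)))) ^ ((i : ℕ) + 1)).submatrix
          id j.succAbove)
        = Polynomial.C c *
          ∏ ν ∈ (Finset.Icc 1 (m + 1)).erase (m + 1 - (j : ℕ)),
            (Polynomial.X - Polynomial.C (α ^ ν)) := by
  have hpow1 : α ^ (m + 1) = 1 := by rw [← hord]; exact pow_orderOf_eq_one α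
  have hα0 : α ≠ 0 := fun h =>
    one_ne_zero (α := F) (by rw [← hpow1, h, zero_pow (Nat.succ_ne_zero m)])
  -- injectivity of ν ↦ α ^ (m+1-ν) for ν ≤ m
  have hinj : ∀ ν ν' : ℕ, ν ≤ m → ν' ≤ m → α ^ (m + 1 - ν) = α ^ (m + 1 - ν') → ν = ν' := by
    intro ν ν' hν hν' h
    have h1 : α ^ (m + 1 - ν) * α ^ ν = 1 := by
      rw [← pow_add]
      have : m + 1 - ν + ν = m + 1 := by omega
      rw [this, ← hord, pow_orderOf_eq_one]
    have h2 : α ^ (m + 1 - ν') * α ^ ν' = 1 := by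
      rw [← pow_add]
      have : m + 1 - ν' + ν' = m + 1 := by omega
      rw [this, ← hord, pow_orderOf_eq_one]
    have hpow : α ^ ν = α ^ ν' := by
      rw [h] at h1
      exact mul_left_cancel₀ (pow_ne_zero _ hα0) (h1.trans h2.symm)
    have := pow_injOn_Iio_orderOf (x := α) (by rw [hord]; exact Set.mem_Iio.2 (by omega))
      (by rw [hord]; exact Set.mem_Iio.2 (by omega)) hpow
    exact this
  set a : Fin m → F := fun k => α ^ (m + 1 - (j.succAbove k : ℕ)) with ha
  have hainj : Function.Injective a := by
    intro k k' h
    have := hinj _ _ (Nat.lt_succ_iff.mp (j.succAbove k).isLt)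
      (Nat.lt_succ_iff.mp (j.succAbove k').isLt) h
    exact Fin.succAbove_right_injective (Fin.ext this)
  set c : F := ∏ i : Fin m, ∏ k ∈ Finset.Ioi i, (a i - a k) with hc
  refine ⟨c, ?_, ?_⟩
  · apply Finset.prod_ne_zero_iff.mpr
    intro i _
    apply Finset.prod_ne_zero_iff.mpr
    intro k hk
    have : i ≠ k := (Finset.mem_Ioi.mp hk).ne
    exact sub_ne_zero_of_ne fun h => this (hainj h)
  · have hM : ((Matrix.of fun (i : Fin m) (ν : Fin (m + 1)) =>
          (X - C (α ^ (m + 1 - (ν : ℕ)))) ^ ((i : ℕ) + 1)).submatrix id j.succAbove)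
        = Matrix.of fun (i k : Fin m) => (X - C (a k)) * (X - C (a k)) ^ (i : ℕ) := by
      ext i k
      simp [pow_succ, mul_comm, Matrix.submatrix, ha]
    rw [hM, Matrix.det_mul_row (fun k => X - C (a k)) (fun (i k : Fin m) => (X - C (a k)) ^ (i : ℕ))]
    have hvdm : (Matrix.det fun (i k : Fin m) => (X - C (a k)) ^ (i : ℕ))
        = (Matrix.vandermonde fun k => X - C (a k)).det := by
      rw [← Matrix.det_transpose (Matrix.vandermonde _)]
      congr 1
    rw [hvdm, Matrix.det_vandermonde]
    have hdiff : ∀ i k : Fin m, (X - C (a k)) - (X - C (a i)) = C (a i - a k) := by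
      intro i k; rw [map_sub]; ring
    have : (∏ i : Fin m, ∏ k ∈ Finset.Ioi i, ((X - C (a k)) - (X - C (a i))))
        = C c := by
      rw [hc, map_prod]
      refine Finset.prod_congr rfl fun i _ => ?_
      rw [map_prod]
      exact Finset.prod_congr rfl fun k _ => hdiff i k
    rw [this, mul_comm]
    congr 1
    rw [ha]
    refine Finset.prod_nbij (fun k => m + 1 - ((j.succAbove k : ℕ))) ?_ ?_ ?_ ?_
    · intro k _
      have h1 : (j.succAbove k : ℕ) ≤ m := Nat.lt_succ_iff.mp (j.succAbove k).isLt
      have h2 : (j.succAbove k : ℕ) ≠ (j : ℕ) := fun h => j.succAbove_ne k (Fin.ext h)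
      have h3 : (j : ℕ) ≤ m := Nat.lt_succ_iff.mp j.isLt
      show m + 1 - ((j.succAbove k : ℕ)) ∈ _
      exact Finset.mem_erase.mpr ⟨by omega, Finset.mem_Icc.mpr ⟨by omega, by omega⟩⟩
    · intro k _ k' _ h
      simp only at h
      have h1 : (j.succAbove k : ℕ) ≤ m := Nat.lt_succ_iff.mp (j.succAbove k).isLt
      have h2 : (j.succAbove k' : ℕ) ≤ m := Nat.lt_succ_iff.mp (j.succAbove k').isLt
      exact Fin.succAbove_right_injective (p := j) (Fin.ext (by omega))
    · intro ν hν
      obtain ⟨hne, hmem⟩ := Finset.mem_erase.mp hν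
      obtain ⟨h1, h2⟩ := Finset.mem_Icc.mp hmem
      have h3 : (j : ℕ) ≤ m := Nat.lt_succ_iff.mp j.isLt
      have hν0 : m + 1 - ν ≤ m := by omega
      have hν₀j : (⟨m + 1 - ν, by omega⟩ : Fin (m + 1)) ≠ j := by
        intro h
        exact hne (by have := congrArg Fin.val h; simp at this; omega)
      obtain ⟨k, hk⟩ := Fin.exists_succAbove_eq hν₀j
      refine ⟨k, by simp, ?_⟩
      show m + 1 - ((j.succAbove k : ℕ)) = ν
      rw [hk]
      simp only []
      omega
    · intro k _
      rfl
end

section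
/- Let F be a field, α ∈ F with ord(α) = n, and define H_min ∈ F[z]^{(n−1)×n} with (j,ν) entry (α^{n−ν+1})^{j−1} z − (α^{n−ν+1})^j, for j = 1,…,n−1, ν = 1,…,n. Then G·H_min^T = 0 where G = Σ_{ν=0}^{n−1} z^ν (1, α^ν, …, α^{(n−1)ν}). -/
open Polynomial

/-- Let `α ∈ F` have multiplicative order exactly `n`, and let
`H_min ∈ F[z]^{(n-1)×n}` have `(j,ν)` entry `(α^{n-ν+1})^{j-1} z - (α^{n-ν+1})^j`
(`j = 1,…,n-1`, `ν = 1,…,n`).  Then `G · H_minᵀ = 0` for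
`G = Σ_{ν=0}^{n-1} z^ν (1, α^ν, …, α^{(n-1)ν})`, i.e. for every `j = 1, …, n-1`,
`Σ_{ν=1}^{n} G_ν(z) · ((α^{n-ν+1})^{j-1} z - (α^{n-ν+1})^j) = 0`. -/
theorem stmt11 (F : Type*) [Field F] (n : ℕ) (α : F) (hord : orderOf α = n)
    (j : ℕ) (hj1 : 1 ≤ j) (hj2 : j ≤ n - 1) :
    ∑ ν ∈ Finset.Icc 1 n,
      (∑ μ ∈ Finset.range n, Polynomial.C (α ^ ((ν - 1) * μ)) * Polynomial.X ^ μ) *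
        (Polynomial.C ((α ^ (n - ν + 1)) ^ (j - 1)) * Polynomial.X
          - Polynomial.C ((α ^ (n - ν + 1)) ^ j)) = 0 := by
  have hn2 : 2 ≤ n := by omega
  have hα : α ^ n = 1 := by rw [← hord]; exact pow_orderOf_eq_one α
  have hαj : (α ^ j) ≠ 1 := by
    intro h
    have hd := orderOf_dvd_of_pow_eq_one h
    rw [hord] at hd
    exact absurd (Nat.le_of_dvd (by omega) hd) (by omega)
  have hgeom : ∑ i ∈ Finset.range n, (α ^ j) ^ i = 0 := by
    rw [geom_sum_eq hαj]
    rw [← pow_mul, mul_comm j n, pow_mul, hα, one_pow, sub_self, zero_div]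
  have hT0 : ∑ i ∈ Finset.range n, (α ^ (n - i)) ^ j = 0 := by
    rw [← Finset.sum_range_reflect]
    have : ∀ i ∈ Finset.range n, (α ^ (n - (n - 1 - i))) ^ j = α ^ j * (α ^ j) ^ i := by
      intro i hi
      rw [Finset.mem_range] at hi
      rw [show n - (n - 1 - i) = i + 1 by omega, ← pow_mul, ← pow_mul, ← pow_add,
        show j + j * i = (i + 1) * j by ring]
    rw [Finset.sum_congr rfl this, ← Finset.mul_sum, hgeom, mul_zero]
  -- reindex Icc 1 n  →  range n
  rw [show Finset.Icc 1 n = Finset.Ico 1 (n + 1) by rw [Finset.Ico_add_one_right_eq_Icc],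
    Finset.sum_Ico_eq_sum_range]
  simp only [Nat.add_sub_cancel]
  have reix : ∀ i ∈ Finset.range n,
      (∑ μ ∈ Finset.range n, C (α ^ ((1 + i - 1) * μ)) * X ^ μ) *
        (C ((α ^ (n - (1 + i) + 1)) ^ (j - 1)) * X - C ((α ^ (n - (1 + i) + 1)) ^ j))
      = C (α ^ (i * n) * (α ^ (n - i)) ^ j) * X ^ n
          - C (α ^ (i * 0) * (α ^ (n - i)) ^ j) * X ^ 0 := by
    intro i hi
    rw [Finset.mem_range] at hi
    rw [show 1 + i - 1 = i by omega, show n - (1 + i) + 1 = n - i by omega]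
    rw [← Finset.sum_range_sub (fun μ => C (α ^ (i * μ) * (α ^ (n - i)) ^ j) * X ^ μ),
      Finset.sum_mul]
    apply Finset.sum_congr rfl
    intro μ _
    have h4 : α ^ i * α ^ (n - i) = 1 := by
      rw [← pow_add, show i + (n - i) = n by omega, hα]
    have hcoef : α ^ (i * μ) * (α ^ (n - i)) ^ (j - 1)
        = α ^ (i * (μ + 1)) * (α ^ (n - i)) ^ j := by
      have hj : (α ^ (n - i)) ^ j = (α ^ (n - i)) ^ (j - 1) * α ^ (n - i) := by
        conv_lhs => rw [show j = j - 1 + 1 by omega]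
        rw [pow_succ]
      rw [hj, show i * (μ + 1) = i * μ + i by ring, pow_add]
      calc α ^ (i * μ) * (α ^ (n - i)) ^ (j - 1)
          = α ^ (i * μ) * (α ^ (n - i)) ^ (j - 1) * (α ^ i * α ^ (n - i)) := by
            rw [h4, mul_one]
        _ = α ^ (i * μ) * α ^ i * ((α ^ (n - i)) ^ (j - 1) * α ^ (n - i)) := by ring
    rw [mul_sub]
    congr 1
    · rw [show C (α ^ (i * μ)) * X ^ μ * (C ((α ^ (n - i)) ^ (j - 1)) * X)
          = C (α ^ (i * μ) * (α ^ (n - i)) ^ (j - 1)) * X ^ (μ + 1) by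
        rw [C_mul]; ring]
      rw [hcoef]
    · rw [C_mul]; ring
  rw [Finset.sum_congr rfl reix, Finset.sum_sub_distrib, ← Finset.sum_mul, ← Finset.sum_mul,
    ← map_sum C _ _, ← map_sum C _ _]
  have hTn : ∑ i ∈ Finset.range n, α ^ (i * n) * (α ^ (n - i)) ^ j = 0 := by
    have : ∀ i ∈ Finset.range n, α ^ (i * n) * (α ^ (n - i)) ^ j = (α ^ (n - i)) ^ j := by
      intro i _
      rw [mul_comm i n, pow_mul, hα, one_pow, one_mul]
    rw [Finset.sum_congr rfl this, hT0]
  have hTz : ∑ i ∈ Finset.range n, α ^ (i * 0) * (α ^ (n - i)) ^ j = 0 := by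
    simp only [Nat.mul_zero, pow_zero, one_mul]
    exact hT0
  rw [hTn, hTz, map_zero, zero_mul, zero_mul, sub_zero]
end

section
/- Let F be a field, n coprime to char F, α ∈ F with ord(α) = n, A = F[x]/(x^n−1), ε_k the primitive idempotents, and σ(x) = αx. In the skew ring A[z;σ], the element g = Σ_{ν=0}^{δ} z^ν Σ_{i=0}^{n−1} α^{νi} x^i satisfies g = n·ε_0·Σ_{ν=0}^{δ} z^ν = n Σ_{ν=0}^{δ} z^ν ε_{(n−ν) mod n}. -/
open Polynomial

lemma aux_inj {F : Type*} [Field F] {n : ℕ} (hn0 : 0 < n) {α : F}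
    (hord : orderOf α = n) : Set.InjOn (α ^ ·) (Set.Iio n) := by
  intro i hi j hj hij
  simp only at hij
  simp only [Set.mem_Iio] at hi hj
  by_contra hne
  wlog h : i < j generalizing i j
  · exact this hij.symm hj hi (Ne.symm hne) (by omega)
  have hα : α ≠ 0 := by
    intro h0
    have := pow_orderOf_eq_one α
    rw [hord, h0, zero_pow hn0.ne'] at this
    exact zero_ne_one this
  have h1 : α ^ (j - i) = 1 := by
    have : α ^ i * α ^ (j - i) = α ^ i * 1 := by
      rw [mul_one, ← pow_add, Nat.add_sub_cancel' h.le, hij]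
    exact mul_left_cancel₀ (pow_ne_zero _ hα) this
  have hd := orderOf_dvd_of_pow_eq_one h1
  rw [hord] at hd
  have := Nat.le_of_dvd (by omega) hd
  omega

lemma aux_eq_of_eval {F : Type*} [Field F] {n : ℕ} (hn0 : 0 < n) {α : F}
    (hord : orderOf α = n) {P Q : Polynomial F}
    (hP : P.degree < n) (hQ : Q.degree < n)
    (h : ∀ j < n, P.eval (α ^ j) = Q.eval (α ^ j)) : P = Q := by
  classical
  rcases eq_or_ne (P - Q) 0 with h0 | h0
  · exact sub_eq_zero.mp h0
  have hsub : (P - Q) = 0 := by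
    apply Polynomial.eq_zero_of_natDegree_lt_card_of_eval_eq_zero'
      (s := (Finset.range n).image (α ^ ·))
    · intro x hx
      simp only [Finset.mem_image, Finset.mem_range] at hx
      obtain ⟨j, hj, rfl⟩ := hx
      simp [h j hj]
    · rw [Finset.card_image_of_injOn (fun i hi j hj => aux_inj hn0 hord
        (Set.mem_Iio.mpr (Finset.mem_range.mp hi)) (Set.mem_Iio.mpr (Finset.mem_range.mp hj))),
        Finset.card_range]
      rw [natDegree_lt_iff_degree_lt h0]
      exact lt_of_le_of_lt (degree_sub_le P Q) (max_lt hP hQ)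
  exact sub_eq_zero.mp hsub

lemma aux_mod {n r j : ℕ} (hn0 : 0 < n) (hr : r < n) (hj : j < n) :
    (j = (n - r) % n ↔ (r + j) % n = 0) := by
  have h1 : (n - r) % n = if r = 0 then 0 else n - r := by
    split
    · simp [*]
    · exact Nat.mod_eq_of_lt (by omega)
  have h2 : (r + j) % n = if r + j < n then r + j else r + j - n := by
    split
    · exact Nat.mod_eq_of_lt (by omega)
    · rw [Nat.mod_eq_sub_mod (by omega), Nat.mod_eq_of_lt (by omega)]
  rw [h1, h2]
  split <;> split <;> omega

lemma aux_geom {F : Type*} [Field F] {n : ℕ} (hn0 : 0 < n) {α : F}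
    (hord : orderOf α = n) (m : ℕ) :
    ∑ i ∈ Finset.range n, (α ^ m) ^ i = if n ∣ m then (n : F) else 0 := by
  by_cases hd : n ∣ m
  · have h1 : α ^ m = 1 := orderOf_dvd_iff_pow_eq_one.mp (hord ▸ hd)
    simp [h1, hd]
  · have hne1 : α ^ m ≠ 1 := fun h => hd (hord ▸ orderOf_dvd_of_pow_eq_one h)
    rw [geom_sum_eq hne1]
    have h1 : (α ^ m) ^ n = 1 := by
      rw [← pow_mul, mul_comm, pow_mul, ← hord, pow_orderOf_eq_one, one_pow]
    simp [h1, hd]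

lemma aux_deg_sum {F : Type*} [Field F] {n : ℕ} (hn0 : 0 < n) (a : F) :
    (∑ i ∈ Finset.range n, (Polynomial.C a * Polynomial.X) ^ i).degree < (n : WithBot ℕ) := by
  apply lt_of_le_of_lt (Polynomial.degree_sum_le _ _)
  rw [Finset.sup_lt_iff (by exact_mod_cast WithBot.bot_lt_coe (n:ℕ))]
  intro i hi
  calc ((Polynomial.C a * Polynomial.X) ^ i).degree
      = (Polynomial.C (a ^ i) * Polynomial.X ^ i).degree := by rw [mul_pow, Polynomial.C_pow]
    _ ≤ (i : WithBot ℕ) := Polynomial.degree_C_mul_X_pow_le _ _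
    _ < (n : WithBot ℕ) := by exact_mod_cast Finset.mem_range.mp hi

lemma aux_deg_C_mul {F : Type*} [Field F] (c : F) (p : Polynomial F) :
    (Polynomial.C c * p).degree ≤ p.degree := by
  calc (Polynomial.C c * p).degree ≤ (Polynomial.C c).degree + p.degree :=
        Polynomial.degree_mul_le _ _
    _ ≤ 0 + p.degree := add_le_add Polynomial.degree_C_le le_rfl
    _ = p.degree := zero_add _

lemma aux_sigma {F : Type*} [Field F] {n : ℕ} {α : F}
    (σ : (Polynomial F ⧸ Ideal.span {Polynomial.X ^ n - 1}) ≃ₐ[F]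
         (Polynomial F ⧸ Ideal.span {Polynomial.X ^ n - 1}))
    (hσ : σ (Ideal.Quotient.mk (Ideal.span {Polynomial.X ^ n - 1}) Polynomial.X)
        = Ideal.Quotient.mk (Ideal.span {Polynomial.X ^ n - 1})
            (Polynomial.C α * Polynomial.X)) (P : Polynomial F) :
    σ (Ideal.Quotient.mk (Ideal.span {Polynomial.X ^ n - 1}) P)
      = Ideal.Quotient.mk (Ideal.span {Polynomial.X ^ n - 1})
          (P.comp (Polynomial.C α * Polynomial.X)) := by
  have h1 : (Ideal.Quotient.mk (Ideal.span {Polynomial.X ^ n - 1})) P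
      = aeval ((Ideal.Quotient.mk (Ideal.span {Polynomial.X ^ n - 1})) X) P := by
    rw [← Ideal.Quotient.mkₐ_eq_mk F, aeval_algHom_apply, aeval_X_left_apply]
  have h2 : σ ((aeval ((Ideal.Quotient.mk (Ideal.span {Polynomial.X ^ n - 1})) X)) P)
      = aeval (σ ((Ideal.Quotient.mk (Ideal.span {Polynomial.X ^ n - 1})) X)) P := by
    simpa using (aeval_algHom_apply σ.toAlgHom
      ((Ideal.Quotient.mk (Ideal.span {Polynomial.X ^ n - 1})) X) P).symm
  have h3 : aeval ((Ideal.Quotient.mk (Ideal.span {Polynomial.X ^ n - 1}))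
        (Polynomial.C α * Polynomial.X)) P
      = (Ideal.Quotient.mk (Ideal.span {Polynomial.X ^ n - 1}))
        (P.comp (Polynomial.C α * Polynomial.X)) := by
    have h4 := aeval_algHom_apply
      (Ideal.Quotient.mkₐ F (Ideal.span {Polynomial.X ^ n - 1}))
      (Polynomial.C α * Polynomial.X) P
    simp only [Ideal.Quotient.mkₐ_eq_mk] at h4
    rw [h4]
    congr 1
  rw [h1, h2, hσ, h3]

/-- Setup as in the previous statements: `A = F[x]/(x^n - 1)`, `n` coprime
to `char F`, `ord(α) = n`, `σ(x) = αx`, and `ε_0, …, ε_{n-1}` the primitive idempotents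
(classes of polynomials `e k` of degree `< n` with `(e k)(α^i) = δ_{k,i}`).  In the skew
ring `A[z;σ]`, the element `g = Σ_{ν=0}^{δ} z^ν g_ν` with `g_ν = Σ_{i=0}^{n-1} α^{νi} x^i`
satisfies `g = n ε_0 Σ_{ν=0}^{δ} z^ν = n Σ_{ν=0}^{δ} z^ν ε_{(n-ν) mod n}`;
coefficientwise: `g_ν = n σ^ν(ε_0) = n ε_{(n-ν) mod n}` in `A` for all `ν ≤ δ`. -/
theorem stmt16 (F : Type*) [Field F] (n δ : ℕ) (hn0 : 0 < n) (α : F)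
    (hord : orderOf α = n) (hn : (n : F) ≠ 0)
    (e : ℕ → Polynomial F)
    (hdeg : ∀ k < n, (e k).degree < n)
    (heval : ∀ k < n, ∀ i < n, Polynomial.eval (α ^ i) (e k) = if i = k then 1 else 0)
    (σ : (Polynomial F ⧸ Ideal.span {Polynomial.X ^ n - 1}) ≃ₐ[F]
         (Polynomial F ⧸ Ideal.span {Polynomial.X ^ n - 1}))
    (hσ : σ (Ideal.Quotient.mk (Ideal.span {Polynomial.X ^ n - 1}) Polynomial.X)
        = Ideal.Quotient.mk (Ideal.span {Polynomial.X ^ n - 1})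
            (Polynomial.C α * Polynomial.X)) :
    ∀ ν ≤ δ,
      Ideal.Quotient.mk (Ideal.span {Polynomial.X ^ n - 1})
          (∑ i ∈ Finset.range n, (Polynomial.C (α ^ ν) * Polynomial.X) ^ i)
        = Ideal.Quotient.mk (Ideal.span {Polynomial.X ^ n - 1}) (Polynomial.C (n : F))
            * (⇑σ)^[ν] (Ideal.Quotient.mk (Ideal.span {Polynomial.X ^ n - 1}) (e 0)) ∧
      Ideal.Quotient.mk (Ideal.span {Polynomial.X ^ n - 1})
          (∑ i ∈ Finset.range n, (Polynomial.C (α ^ ν) * Polynomial.X) ^ i)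
        = Ideal.Quotient.mk (Ideal.span {Polynomial.X ^ n - 1})
            (Polynomial.C (n : F) * e ((n - ν % n) % n)) := by
  intro ν _
  have hα : α ≠ 0 := by
    intro h0
    have h1 := pow_orderOf_eq_one α
    rw [hord, h0, zero_pow hn0.ne'] at h1
    exact zero_ne_one h1
  -- iterate of σ
  have hiterall : ∀ m, (⇑σ)^[m] (Ideal.Quotient.mk (Ideal.span {Polynomial.X ^ n - 1}) (e 0))
      = Ideal.Quotient.mk (Ideal.span {Polynomial.X ^ n - 1})
          ((e 0).comp (Polynomial.C (α ^ m) * Polynomial.X)) := by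
    intro m
    induction m with
    | zero => simp
    | succ m ih =>
        rw [Function.iterate_succ_apply', ih, aux_sigma σ hσ, Polynomial.comp_assoc]
        congr 2
        rw [mul_comp, C_comp, X_comp, ← mul_assoc, ← C_mul, ← pow_succ]
  have hiter := hiterall ν
  -- evaluation of the sum
  have hevalsum : ∀ j < n,
      Polynomial.eval (α ^ j) (∑ i ∈ Finset.range n, (Polynomial.C (α ^ ν) * Polynomial.X) ^ i)
        = if n ∣ ν + j then (n : F) else 0 := by
    intro j hj
    rw [Polynomial.eval_finset_sum]
    simp only [eval_pow, eval_mul, eval_C, eval_X, ← pow_add]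
    exact aux_geom hn0 hord (ν + j)
  -- the mod-n condition
  have hdvd : ∀ j, n ∣ ν + j ↔ (ν + j) % n = 0 := fun j => Nat.dvd_iff_mod_eq_zero
  -- conjunct 1
  constructor
  · have hpoly : (∑ i ∈ Finset.range n, (Polynomial.C (α ^ ν) * Polynomial.X) ^ i)
        = Polynomial.C (n : F) * (e 0).comp (Polynomial.C (α ^ ν) * Polynomial.X) := by
      apply aux_eq_of_eval hn0 hord (aux_deg_sum hn0 _)
      · apply lt_of_le_of_lt (aux_deg_C_mul _ _)
        rcases eq_or_ne ((e 0).comp (Polynomial.C (α ^ ν) * Polynomial.X)) 0 with h0 | h0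
        · rw [h0, Polynomial.degree_zero]
          exact_mod_cast WithBot.bot_lt_coe (n : ℕ)
        · rw [← Polynomial.natDegree_lt_iff_degree_lt h0, Polynomial.natDegree_comp]
          have hq : (Polynomial.C (α ^ ν) * Polynomial.X).natDegree = 1 := by
            rw [Polynomial.natDegree_C_mul_X _ (pow_ne_zero _ hα)]
          rw [hq, mul_one]
          have he0 : e 0 ≠ 0 := fun h => h0 (by simp [h])
          exact (Polynomial.natDegree_lt_iff_degree_lt he0).mpr (hdeg 0 hn0)
      · intro j hj
        rw [hevalsum j hj, eval_mul, eval_C, eval_comp, eval_mul, eval_C, eval_X, ← pow_add]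
        have hmod : α ^ (ν + j) = α ^ ((ν + j) % n) := by
          conv_rhs => rw [← hord]
          rw [pow_mod_orderOf]
        rw [hmod, heval 0 hn0 ((ν + j) % n) (Nat.mod_lt _ hn0)]
        by_cases hd : n ∣ ν + j
        · have h5 : (ν + j) % n = 0 := (hdvd j).mp hd
          simp [hd, h5]
        · have h5 : ¬ (ν + j) % n = 0 := fun h => hd ((hdvd j).mpr h)
          simp [hd, h5]
    rw [hpoly, map_mul, hiter]
  · have hk : (n - ν % n) % n < n := Nat.mod_lt _ hn0
    have hpoly : (∑ i ∈ Finset.range n, (Polynomial.C (α ^ ν) * Polynomial.X) ^ i)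
        = Polynomial.C (n : F) * e ((n - ν % n) % n) := by
      apply aux_eq_of_eval hn0 hord (aux_deg_sum hn0 _)
      · exact lt_of_le_of_lt (aux_deg_C_mul _ _) (hdeg _ hk)
      · intro j hj
        rw [hevalsum j hj, eval_mul, eval_C, heval _ hk j hj]
        have hiff : (j = (n - ν % n) % n) ↔ n ∣ ν + j := by
          rw [aux_mod hn0 (Nat.mod_lt _ hn0) hj, hdvd j, Nat.add_mod, Nat.mod_mod_of_dvd,
            ← Nat.add_mod]
          exact dvd_refl n
        by_cases hd : n ∣ ν + j
        · have h5 : j = (n - ν % n) % n := hiff.mpr hd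
          rw [if_pos hd, if_pos h5, mul_one]
        · have h5 : ¬ j = (n - ν % n) % n := fun h => hd (hiff.mp h)
          rw [if_neg hd, if_neg h5, mul_zero]
    rw [hpoly]
end
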